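/- arXiv:1510.04837 — 2 statements merged into one kernel-verified Lean document; each statement's English description precedes it below -/
import Mathlib

section
/- Let α > −1 be real, m an integer ≥ 0, and n₁ = m + 2p₁, n₂ = m + 2p₂ with integers p₁, p₂ ≥ 0. Then ∫₀¹ ²R_{n₁}^{m,α}(ρ) ²R_{n₂}^{m,α}(ρ) ρ (1−ρ²)^{−α} dρ = δ_{n₁n₂} · ²N_{nm}^{α}, where δ is the Kronecker delta and, for n = m + 2p, ²N_{nm}^{α} = 1/(2(n+α+1)) · (p+1)_α/(p+m+1)_α. -/
open Real MeasureTheory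

noncomputable def genBinom (a : ℝ) (p : ℕ) : ℝ :=
  (∏ j ∈ Finset.range p, (a - j)) / (Nat.factorial p : ℝ)

noncomputable def jacobiP (k : ℕ) (a b : ℝ) (x : ℝ) : ℝ :=
  ∑ j ∈ Finset.range (k + 1),
    genBinom ((k : ℝ) + a) (k - j) * genBinom ((k : ℝ) + b) j *
      ((x - 1) / 2) ^ j * ((x + 1) / 2) ^ (k - j)

/-- generalized Pochhammer symbol `(x)_α = Γ(x+α)/Γ(x)` -/
noncomputable def pochG (x α : ℝ) : ℝ := Real.Gamma (x + α) / Real.Gamma x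

/-- integer-order Pochhammer symbol `(x)_k = x(x+1)⋯(x+k−1)` -/
noncomputable def pochN (x : ℝ) (k : ℕ) : ℝ := ∏ j ∈ Finset.range k, (x + j)

/-- generalized 3D Zernike radial function `R_{l+2p}^{l,α}` -/
noncomputable def R3 (α : ℝ) (l p : ℕ) (ρ : ℝ) : ℝ :=
  ρ ^ l * (1 - ρ ^ 2) ^ α * jacobiP p α ((l : ℝ) + 1 / 2) (2 * ρ ^ 2 - 1)

/-- generalized 2D Zernike radial function `²R_{m+2p}^{m,α}` -/
noncomputable def R2 (α : ℝ) (m p : ℕ) (ρ : ℝ) : ℝ :=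
  ρ ^ m * (1 - ρ ^ 2) ^ α * jacobiP p α (m : ℝ) (2 * ρ ^ 2 - 1)

/-- spherical Bessel function of real order `a` -/
noncomputable def sphBessel (a : ℝ) (z : ℝ) : ℝ :=
  Real.sqrt π / 2 * (z / 2) ^ a *
    ∑' k : ℕ, (-(z ^ 2) / 4) ^ k / ((Nat.factorial k : ℝ) * Real.Gamma ((k : ℝ) + a + 3 / 2))

/-- Gegenbauer polynomial `C_n^λ` -/
noncomputable def gegenbauer (n : ℕ) (lam : ℝ) (x : ℝ) : ℝ :=
  ∑ k ∈ Finset.range (n / 2 + 1),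
    (-1) ^ k * Real.Gamma (((n - k : ℕ) : ℝ) + lam) /
      (Real.Gamma lam * (Nat.factorial k : ℝ) * (Nat.factorial (n - 2 * k) : ℝ)) *
      (2 * x) ^ (n - 2 * k)

/-- Legendre polynomial `P_l` -/
noncomputable def legendreFun (l : ℕ) (x : ℝ) : ℝ :=
  (1 / 2 ^ l) * ∑ k ∈ Finset.range (l + 1),
    ((Nat.choose l k : ℝ)) ^ 2 * (x - 1) ^ (l - k) * (x + 1) ^ k

/-- associated Legendre function `P_l^m` -/
noncomputable def assocLegendre (l m : ℕ) (x : ℝ) : ℝ :=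
  (1 - x ^ 2) ^ ((m : ℝ) / 2) * iteratedDeriv m (legendreFun l) x

/-- spherical harmonic `Y_l^m`, evaluated at a (unit) vector `v ∈ ℝ³`:
`cos θ = v 2`, `φ = arg (v 0 + i v 1)`. -/
noncomputable def sphHarm (l : ℕ) (m : ℤ) (v : EuclideanSpace ℝ (Fin 3)) : ℂ :=
  (-1 : ℂ) ^ m *
    (Real.sqrt ((2 * l + 1) / (4 * π) *
      (Nat.factorial (l - m.natAbs) : ℝ) / (Nat.factorial (l + m.natAbs) : ℝ)) : ℝ) *
    (assocLegendre l m.natAbs (v 2) : ℝ) *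
    Complex.exp (Complex.I * m * (Complex.arg (v 0 + Complex.I * v 1) : ℝ))

/-- generalized 3D Zernike function `Z_{nl}^{m,α}` on ℝ³ -/
noncomputable def Z3 (α : ℝ) (l p : ℕ) (m : ℤ) (ω : EuclideanSpace ℝ (Fin 3)) : ℂ :=
  (R3 α l p ‖ω‖ : ℝ) * sphHarm l m (‖ω‖⁻¹ • ω)

/-- `²N_{nm}^α` with `n = m + 2p` -/
noncomputable def N2 (α : ℝ) (m p : ℕ) : ℝ :=
  1 / (2 * (((m + 2 * p : ℕ) : ℝ) + α + 1)) *
    (pochG ((p : ℝ) + 1) α / pochG ((p : ℝ) + (m : ℝ) + 1) α)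

lemma gbPascal (a : ℝ) (k : ℕ) :
    genBinom (a + 1) (k + 1) = genBinom a (k + 1) + genBinom a k := by
  unfold genBinom
  rw [div_add_div _ _ (by positivity) (by positivity)]
  rw [div_eq_div_iff (by positivity) (by positivity)]
  rw [Finset.prod_range_succ', Finset.prod_range_succ]
  have h : ∀ x ∈ Finset.range k, (a + 1 - ((x + 1 : ℕ):ℝ)) = a - x := by
    intro x _; push_cast; ring
  rw [Finset.prod_congr rfl h]
  push_cast [Nat.factorial_succ]
  ring

lemma gbNat (n k : ℕ) : genBinom (n : ℝ) k = (n.choose k : ℝ) := by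
  induction n generalizing k with
  | zero =>
    cases k with
    | zero => simp [genBinom]
    | succ k =>
      simp only [genBinom, Nat.cast_zero]
      rw [Finset.prod_range_succ']
      simp
  | succ n ih =>
    cases k with
    | zero => simp [genBinom]
    | succ k =>
      push_cast
      rw [gbPascal, ih, ih, Nat.choose_succ_succ]
      push_cast; ring


lemma gbZero (a : ℝ) : genBinom a 0 = 1 := by simp [genBinom]

lemma vand (b : ℕ) : ∀ (p : ℕ) (a : ℝ),
    ∑ i ∈ Finset.range (p+1), genBinom a (p - i) * ((b.choose i : ℕ) : ℝ)
      = genBinom (a + b) p := by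
  induction b with
  | zero =>
    intro p a
    rw [Finset.sum_eq_single 0]
    · simp
    · intro i _ hi
      cases i with
      | zero => simp at hi
      | succ i => simp
    · simp
  | succ b ih =>
    intro p a
    cases p with
    | zero => simp [gbZero]
    | succ p =>
      rw [Finset.sum_range_succ']
      have h1 : ∀ i ∈ Finset.range (p+1),
          genBinom a (p + 1 - (i+1)) * (((b+1).choose (i+1) : ℕ) : ℝ)
            = genBinom a (p - i) * ((b.choose (i+1) : ℕ):ℝ)
              + genBinom a (p - i) * ((b.choose i : ℕ):ℝ) := by
        intro i _
        rw [Nat.choose_succ_succ]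
        have : p + 1 - (i+1) = p - i := by omega
        rw [this]; push_cast; ring
      rw [Finset.sum_congr rfl h1, Finset.sum_add_distrib]
      have hIH1 := ih (p+1) a
      rw [Finset.sum_range_succ'] at hIH1
      have h2 : ∀ i ∈ Finset.range (p+1),
          genBinom a (p + 1 - (i+1)) * ((b.choose (i+1) : ℕ) : ℝ)
            = genBinom a (p - i) * ((b.choose (i+1) : ℕ):ℝ) := by
        intro i _
        have : p + 1 - (i+1) = p - i := by omega
        rw [this]
      rw [Finset.sum_congr rfl h2] at hIH1
      have hS1 : ∑ i ∈ Finset.range (p+1), genBinom a (p - i) * ((b.choose (i+1) : ℕ):ℝ)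
          = genBinom (a + b) (p+1) - genBinom a (p+1) := by
        simp only [Nat.choose_zero_right, Nat.cast_one, mul_one, Nat.sub_zero] at hIH1
        linarith [hIH1]
      rw [hS1, ih p a]
      have : a + ((b+1 : ℕ) : ℝ) = (a + b) + 1 := by push_cast; ring
      rw [this, gbPascal]
      simp [gbZero]
      ring


lemma GammaProd (x : ℝ) (hx : 0 < x) (n : ℕ) :
    Real.Gamma (x + n) = (∏ j ∈ Finset.range n, (x + j)) * Real.Gamma x := by
  induction n with
  | zero => simp
  | succ n ih =>
    have : x + ((n+1 : ℕ) : ℝ) = (x + n) + 1 := by push_cast; ring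
    rw [this, Real.Gamma_add_one (by positivity), ih, Finset.prod_range_succ]
    ring

lemma gbGamma (x : ℝ) (hx : 0 < x) (k : ℕ) :
    genBinom (x + k - 1) k = Real.Gamma (x + k) / (Real.Gamma x * (Nat.factorial k : ℝ)) := by
  rw [GammaProd x hx k]
  unfold genBinom
  rw [← Finset.prod_range_reflect]
  have h : ∀ j ∈ Finset.range k, (x + k - 1 - ((k - 1 - j : ℕ) : ℝ)) = x + j := by
    intro j hj
    simp only [Finset.mem_range] at hj
    have : ((k - 1 - j : ℕ) : ℝ) = (k : ℝ) - 1 - j := by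
      have : k - 1 - j = k - (1 + j) := by omega
      rw [this]
      push_cast [Nat.cast_sub (by omega : 1 + j ≤ k)]
      ring
    rw [this]; ring
  rw [Finset.prod_congr rfl h]
  have hG : Real.Gamma x ≠ 0 := (Real.Gamma_pos_of_pos hx).ne'
  have hf : (Nat.factorial k : ℝ) ≠ 0 := by positivity
  field_simp


lemma altV : ∀ (n : ℕ), ∀ (j k : ℕ),
    ∑ i ∈ Finset.range (n+1), (-1:ℝ)^i * (n.choose i : ℝ) * ((n + j - i).choose k : ℝ)
      = if n ≤ k then ((j.choose (k-n) : ℕ) : ℝ) else 0 := by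
  intro n
  induction n with
  | zero => intro j k; simp
  | succ n ih =>
    intro j k
    have e0 : ∀ i, i ∈ Finset.range (n+1) → n + 1 + j - (i+1) = n + j - i := by
      intro i hi; omega
    have e1 : ∀ i, i ∈ Finset.range (n+1) → n + 1 + j - i = (n + j - i) + 1 := by
      intro i hi; simp only [Finset.mem_range] at hi; omega
    -- LHS = -(A) - (B) + C(n+1+j,k)
    have hL : ∑ i ∈ Finset.range (n+1+1), (-1:ℝ)^i * ((n+1).choose i : ℝ) * ((n + 1 + j - i).choose k : ℝ)
        = -(∑ i ∈ Finset.range (n+1), (-1:ℝ)^i * (n.choose i : ℝ) * ((n + j - i).choose k : ℝ))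
          - (∑ i ∈ Finset.range (n+1), (-1:ℝ)^i * (n.choose (i+1) : ℝ) * ((n + j - i).choose k : ℝ))
          + ((n + 1 + j).choose k : ℝ) := by
      rw [Finset.sum_range_succ']
      have : ∀ i ∈ Finset.range (n+1),
          (-1:ℝ)^(i+1) * ((n+1).choose (i+1) : ℝ) * ((n + 1 + j - (i+1)).choose k : ℝ)
          = (-((-1:ℝ)^i * (n.choose i : ℝ) * ((n + j - i).choose k : ℝ)))
            + (-((-1:ℝ)^i * (n.choose (i+1) : ℝ) * ((n + j - i).choose k : ℝ))) := by
        intro i hi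
        rw [e0 i hi, Nat.choose_succ_succ]
        push_cast
        ring
      rw [Finset.sum_congr rfl this, Finset.sum_add_distrib, Finset.sum_neg_distrib,
        Finset.sum_neg_distrib]
      simp only [pow_zero, Nat.choose_zero_right, Nat.cast_one, one_mul, Nat.sub_zero]
      ring
    -- T = -(B) + C(n+1+j,k)
    have hT : ∑ i ∈ Finset.range (n+1), (-1:ℝ)^i * (n.choose i : ℝ) * (((n + j - i) + 1).choose k : ℝ)
        = -(∑ i ∈ Finset.range (n+1), (-1:ℝ)^i * (n.choose (i+1) : ℝ) * ((n + j - i).choose k : ℝ))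
          + ((n + 1 + j).choose k : ℝ) := by
      have h2 : ∀ i ∈ Finset.range (n+1), (-1:ℝ)^i * (n.choose i : ℝ) * (((n + j - i) + 1).choose k : ℝ)
          = (-1:ℝ)^i * (n.choose i : ℝ) * ((n + 1 + j - i).choose k : ℝ) := by
        intro i hi; rw [e1 i hi]
      rw [Finset.sum_congr rfl h2, Finset.sum_range_succ']
      have h3 : ∀ i ∈ Finset.range n,
          (-1:ℝ)^(i+1) * (n.choose (i+1) : ℝ) * ((n + 1 + j - (i+1)).choose k : ℝ)
          = -((-1:ℝ)^i * (n.choose (i+1) : ℝ) * ((n + j - i).choose k : ℝ)) := by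
        intro i hi
        rw [e0 i (by simp only [Finset.mem_range] at hi ⊢; omega)]
        push_cast; ring
      rw [Finset.sum_congr rfl h3, Finset.sum_neg_distrib]
      have h4 : ∑ i ∈ Finset.range (n+1), (-1:ℝ)^i * (n.choose (i+1) : ℝ) * ((n + j - i).choose k : ℝ)
          = ∑ i ∈ Finset.range n, (-1:ℝ)^i * (n.choose (i+1) : ℝ) * ((n + j - i).choose k : ℝ) := by
        rw [Finset.sum_range_succ, Nat.choose_succ_self]
        simp
      rw [h4]
      have h5 : n + 1 + j - 0 = n + 1 + j := by omega
      rw [h5]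
      simp only [pow_zero, Nat.choose_zero_right, Nat.cast_one, one_mul]
    -- combine: LHS = T - A
    rw [hL]
    have hcomb : ∀ i ∈ Finset.range (n+1),
        (-1:ℝ)^i * (n.choose i : ℝ) * ((((n + j - i) + 1).choose k : ℝ))
          - (-1:ℝ)^i * (n.choose i : ℝ) * ((n + j - i).choose k : ℝ)
        = (-1:ℝ)^i * (n.choose i : ℝ) * (((n + j - i) + 1).choose k - ((n + j - i).choose k : ℝ)) := by
      intro i _; ring
    cases k with
    | zero =>
      rw [if_neg (by omega)]
      simp only [Nat.choose_zero_right, Nat.cast_one, mul_one] at hT ⊢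
      linarith [hT]
    | succ k =>
      have hP : ∀ i ∈ Finset.range (n+1),
          (((n + j - i) + 1).choose (k+1) : ℝ) - ((n + j - i).choose (k+1) : ℝ)
            = ((n + j - i).choose k : ℝ) := by
        intro i _
        rw [Nat.choose_succ_succ]
        push_cast; ring
      have hsub : ∑ i ∈ Finset.range (n+1), (-1:ℝ)^i * (n.choose i : ℝ) * (((n+j-i)+1).choose (k+1) : ℝ)
          - ∑ i ∈ Finset.range (n+1), (-1:ℝ)^i * (n.choose i : ℝ) * ((n+j-i).choose (k+1) : ℝ)
          = ∑ i ∈ Finset.range (n+1), (-1:ℝ)^i * (n.choose i : ℝ) * ((n+j-i).choose k : ℝ) := by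
        rw [← Finset.sum_sub_distrib]
        apply Finset.sum_congr rfl
        intro i hi
        rw [← hP i hi]; ring
      have hfin := ih j k
      have goal1 : -(∑ i ∈ Finset.range (n+1), (-1:ℝ)^i * (n.choose i : ℝ) * ((n + j - i).choose (k+1) : ℝ))
          - (∑ i ∈ Finset.range (n+1), (-1:ℝ)^i * (n.choose (i+1) : ℝ) * ((n + j - i).choose (k+1) : ℝ))
          + ((n + 1 + j).choose (k+1) : ℝ)
          = ∑ i ∈ Finset.range (n+1), (-1:ℝ)^i * (n.choose i : ℝ) * ((n+j-i).choose k : ℝ) := by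
        linarith [hsub, hT]
      rw [goal1, hfin]
      have h6 : k + 1 - (n + 1) = k - n := by omega
      rw [h6]
      simp [Nat.succ_le_succ_iff]


lemma intInt (N : ℕ) (β : ℝ) (hβ : -1 < β) :
    IntervalIntegrable (fun ρ : ℝ => ρ^N * (1-ρ^2)^β) volume 0 1 := by
  have h1 : IntervalIntegrable (fun x : ℝ => (1-x)^β) volume 0 1 := by
    simpa using (intervalIntegral.intervalIntegrable_rpow' hβ (a := 1) (b := 0)).comp_sub_left 1
  have h2 : ContinuousOn (fun ρ : ℝ => ρ^N * (1+ρ)^β) (Set.uIcc 0 1) := by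
    apply ContinuousOn.mul (by fun_prop)
    apply ContinuousOn.rpow_const (by fun_prop)
    intro x hx
    simp only [Set.uIcc_of_le (by norm_num : (0:ℝ) ≤ 1), Set.mem_Icc] at hx
    left; intro h; linarith [hx.1]
  have h3 := h1.continuousOn_mul h2
  rw [intervalIntegrable_iff_integrableOn_Ioc_of_le (by norm_num)] at h3 ⊢
  apply h3.congr_fun ?_ measurableSet_Ioc
  intro x hx
  simp only [Set.mem_Ioc] at hx
  have hx1 : (0:ℝ) ≤ 1 - x := by linarith [hx.2]
  have hx2 : (0:ℝ) ≤ 1 + x := by linarith [hx.1]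
  show x ^ N * (1 + x) ^ β * (1 - x) ^ β = x ^ N * (1 - x^2)^β
  rw [mul_assoc, mul_comm ((1+x)^β), ← Real.mul_rpow hx1 hx2,
    show (1-x)*(1+x) = 1-x^2 by ring]

lemma rpow_cont (c : ℝ) (hc : 0 < c) : Continuous (fun x : ℝ => x ^ c) := by
  rw [continuous_iff_continuousAt]
  intro x
  exact Real.continuousAt_rpow_const x c (Or.inr hc.le)

lemma hd_aux (c : ℝ) (hc : 0 < c) (x : ℝ) (hx : x ∈ Set.Ioo (0:ℝ) 1) :
    HasDerivAt (fun ρ : ℝ => (1-ρ^2)^c) (c * (1-x^2)^(c-1) * (-2*x)) x := by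
  obtain ⟨hx0, hx1⟩ := hx
  have hbase : (0:ℝ) < 1 - x^2 := by nlinarith
  have h1 : HasDerivAt (fun ρ : ℝ => 1 - ρ^2) (-2*x) x := by
    simpa using ((hasDerivAt_pow 2 x).const_sub 1)
  exact (Real.hasDerivAt_rpow_const (Or.inl hbase.ne')).comp x h1

lemma Abase (β : ℝ) (hβ : -1 < β) :
    ∫ ρ in (0:ℝ)..1, ρ * (1-ρ^2)^β = 1/(2*(β+1)) := by
  have hb1 : (0:ℝ) < β + 1 := by linarith
  set F : ℝ → ℝ := fun ρ => -(1-ρ^2)^(β+1) / (2*(β+1)) with hF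
  have hcont : ContinuousOn F (Set.Icc 0 1) := by
    apply Continuous.continuousOn
    apply Continuous.div_const
    exact ((rpow_cont (β+1) hb1).comp (by fun_prop)).neg
  have hderiv : ∀ x ∈ Set.Ioo (0:ℝ) 1, HasDerivWithinAt F (x * (1-x^2)^β) (Set.Ioi x) x := by
    intro x hx
    have := (((hd_aux (β+1) hb1 x hx).neg).div_const (2*(β+1)))
    have heq : -((β+1) * (1-x^2)^(β+1-1) * (-2*x)) / (2*(β+1)) = x * (1-x^2)^β := by
      rw [show β + 1 - 1 = β by ring]
      field_simp
    rw [heq] at this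
    exact this.hasDerivWithinAt
  have hint : IntervalIntegrable (fun ρ : ℝ => ρ * (1-ρ^2)^β) volume 0 1 := by
    simpa using intInt 1 β hβ
  have key := intervalIntegral.integral_eq_sub_of_hasDeriv_right_of_le (by norm_num : (0:ℝ) ≤ 1) hcont
    (fun x hx => by simpa using hderiv x hx) hint
  rw [key, hF]
  simp only [one_pow, sub_self, zero_pow]
  rw [Real.zero_rpow (by linarith : β + 1 ≠ 0)]
  norm_num [Real.one_rpow]
  field_simp [hb1.ne']

lemma Arec (K : ℕ) (β : ℝ) (hβ : -1 < β) :
    ∫ ρ in (0:ℝ)..1, ρ^(2*(K+1)+1) * (1-ρ^2)^β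
      = ((K:ℝ)+1)/(β+1) * ∫ ρ in (0:ℝ)..1, ρ^(2*K+1) * (1-ρ^2)^(β+1) := by
  have hb1 : (0:ℝ) < β + 1 := by linarith
  set G : ℝ → ℝ := fun ρ => ρ^(2*(K+1)) * (1-ρ^2)^(β+1) with hG
  have hcont : ContinuousOn G (Set.Icc 0 1) := by
    apply Continuous.continuousOn
    exact (continuous_pow _).mul ((rpow_cont (β+1) hb1).comp (by fun_prop))
  set g' : ℝ → ℝ := fun x => ((2*(K:ℝ)+2) * x^(2*K+1)) * (1-x^2)^(β+1)
      + x^(2*(K+1)) * ((β+1) * (1-x^2)^β * (-2*x)) with hg'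
  have hderiv : ∀ x ∈ Set.Ioo (0:ℝ) 1, HasDerivWithinAt G (g' x) (Set.Ioi x) x := by
    intro x hx
    have h1 : HasDerivAt (fun ρ : ℝ => ρ^(2*(K+1))) ((2*(K:ℝ)+2) * x^(2*K+1)) x := by
      have h := hasDerivAt_pow (2*(K+1)) x
      have e : ((2*(K+1) : ℕ) : ℝ) * x^(2*(K+1)-1) = (2*(K:ℝ)+2) * x^(2*K+1) := by
        rw [show 2*(K+1)-1 = 2*K+1 from by omega]; push_cast; ring
      rw [e] at h
      exact h
    have h2 := hd_aux (β+1) hb1 x hx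
    rw [show β + 1 - 1 = β by ring] at h2
    exact (h1.mul h2).hasDerivWithinAt
  have hi1 : IntervalIntegrable (fun x : ℝ => x^(2*K+1) * (1-x^2)^(β+1)) volume 0 1 :=
    intInt _ _ (by linarith)
  have hi2 : IntervalIntegrable (fun x : ℝ => x^(2*(K+1)+1) * (1-x^2)^β) volume 0 1 :=
    intInt _ _ hβ
  have hgeq : g' = fun x : ℝ => (2*(K:ℝ)+2) * (x^(2*K+1) * (1-x^2)^(β+1))
      + (-2*(β+1)) * (x^(2*(K+1)+1) * (1-x^2)^β) := by
    funext x; rw [hg']; ring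
  have hgint : IntervalIntegrable g' volume 0 1 := by
    rw [hgeq]; exact (hi1.const_mul _).add (hi2.const_mul _)
  have key := intervalIntegral.integral_eq_sub_of_hasDeriv_right_of_le (by norm_num : (0:ℝ) ≤ 1) hcont
    hderiv hgint
  have hG1 : G 1 = 0 := by
    rw [hG]; simp [Real.zero_rpow hb1.ne']
  have hG0 : G 0 = 0 := by
    rw [hG]; simp
  rw [hG1, hG0, sub_zero, hgeq] at key
  rw [intervalIntegral.integral_add ((hi1.const_mul _)) ((hi2.const_mul _)),
    intervalIntegral.integral_const_mul, intervalIntegral.integral_const_mul] at key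
  set I1 := ∫ ρ in (0:ℝ)..1, ρ^(2*K+1) * (1-ρ^2)^(β+1)
  set I2 := ∫ ρ in (0:ℝ)..1, ρ^(2*(K+1)+1) * (1-ρ^2)^β
  field_simp
  linarith [key]

lemma AInt (K : ℕ) : ∀ β : ℝ, -1 < β →
    ∫ ρ in (0:ℝ)..1, ρ^(2*K+1) * (1-ρ^2)^β
      = (K.factorial : ℝ) * Real.Gamma (β+1) / (2 * Real.Gamma (β + K + 2)) := by
  induction K with
  | zero =>
    intro β hβ
    have hb1 : (0:ℝ) < β + 1 := by linarith
    have h := Abase β hβ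
    simp only [Nat.cast_zero, Nat.factorial_zero, Nat.cast_one, one_mul, add_zero]
    rw [show (2*0+1 : ℕ) = 1 from rfl]
    simp only [pow_one]
    rw [h]
    rw [show β + 2 = (β + 1) + 1 by ring, Real.Gamma_add_one hb1.ne']
    rw [eq_div_iff (by positivity : 2 * ((β+1) * Real.Gamma (β+1)) ≠ 0)]
    field_simp [hb1.ne']
  | succ K ih =>
    intro β hβ
    have hb1 : (0:ℝ) < β + 1 := by linarith
    rw [Arec K β hβ, ih (β+1) (by linarith)]
    have e1 : β + 1 + (K:ℝ) + 2 = β + ((K:ℕ)+1 : ℕ) + 2 := by push_cast; ring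
    rw [e1, Real.Gamma_add_one hb1.ne']
    have hΓc : Real.Gamma (β + ((K:ℕ)+1 : ℕ) + 2) ≠ 0 := by
      apply (Real.Gamma_pos_of_pos _).ne'
      push_cast; linarith [Nat.cast_nonneg (α := ℝ) K]
    rw [Nat.factorial_succ, div_mul_div_comm]
    rw [show ((K:ℝ)+1) * ((K.factorial : ℝ) * ((β+1) * Real.Gamma (β+1)))
        = (β+1) * (((K:ℝ)+1) * (K.factorial:ℝ) * Real.Gamma (β+1)) from by ring]
    rw [mul_div_mul_left _ _ hb1.ne']
    push_cast
    ring


lemma Msum (α : ℝ) (hα : -1 < α) (m p j : ℕ) (hj : j ≤ p) :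
    ∑ i ∈ Finset.range (p+1),
      genBinom ((p:ℝ)+α) (p-i) * (((p+m).choose i : ℕ):ℝ) * (-1:ℝ)^i *
        (((m+j+(p-i)).factorial : ℝ) * Real.Gamma (α+(i:ℝ)+1)
          / (2 * Real.Gamma ((α+(i:ℝ)) + ((m+j+(p-i):ℕ):ℝ) + 2)))
    = if j = p then Real.Gamma ((p:ℝ)+α+1) * (((m+p).factorial : ℕ):ℝ)
        / (2*Real.Gamma (α+(m:ℝ)+2*(p:ℝ)+2)) else 0 := by
  have hstep : ∀ i ∈ Finset.range (p+1),
      genBinom ((p:ℝ)+α) (p-i) * (((p+m).choose i : ℕ):ℝ) * (-1:ℝ)^i *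
        (((m+j+(p-i)).factorial : ℝ) * Real.Gamma (α+(i:ℝ)+1)
          / (2 * Real.Gamma ((α+(i:ℝ)) + ((m+j+(p-i):ℕ):ℝ) + 2)))
      = (Real.Gamma ((p:ℝ)+α+1) * ((m+j).factorial : ℝ) / (2*Real.Gamma (α+(m:ℝ)+(j:ℝ)+(p:ℝ)+2)))
        * ((-1:ℝ)^i * (((p+m).choose i : ℕ):ℝ) * (((p+m+j-i).choose (m+j) : ℕ):ℝ)) := by
    intro i hi
    simp only [Finset.mem_range] at hi
    have hip : i ≤ p := by omega
    have hx : (0:ℝ) < α + i + 1 := by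
      have : (0:ℝ) ≤ i := Nat.cast_nonneg i
      linarith
    -- genBinom in Gamma form
    have hgb : genBinom ((p:ℝ)+α) (p-i)
        = Real.Gamma ((p:ℝ)+α+1) / (Real.Gamma (α+(i:ℝ)+1) * ((p-i).factorial : ℝ)) := by
      have h := gbGamma (α+(i:ℝ)+1) hx (p-i)
      have e1 : α+(i:ℝ)+1 + ((p-i:ℕ):ℝ) - 1 = (p:ℝ) + α := by
        rw [Nat.cast_sub hip]; ring
      have e2 : α+(i:ℝ)+1 + ((p-i:ℕ):ℝ) = (p:ℝ) + α + 1 := by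
        rw [Nat.cast_sub hip]; ring
      rw [e1, e2] at h
      exact h
    -- Gamma argument normalization
    have e3 : (α+(i:ℝ)) + ((m+j+(p-i):ℕ):ℝ) + 2 = α+(m:ℝ)+(j:ℝ)+(p:ℝ)+2 := by
      push_cast [Nat.cast_sub hip]; ring
    -- factorial split
    have e4 : ((m+j+(p-i)).factorial : ℝ)
        = (((p+m+j-i).choose (m+j) : ℕ):ℝ) * ((m+j).factorial : ℝ) * ((p-i).factorial : ℝ) := by
      have h := Nat.choose_mul_factorial_mul_factorial (show m+j ≤ m+j+(p-i) by omega)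
      have e5 : m+j+(p-i) - (m+j) = p - i := by omega
      rw [e5] at h
      have e6 : p+m+j-i = m+j+(p-i) := by omega
      rw [e6, ← h]
      push_cast; ring
    rw [e3, e4]
    have hG1 : Real.Gamma (α+(i:ℝ)+1) ≠ 0 := (Real.Gamma_pos_of_pos hx).ne'
    have hf1 : ((p-i).factorial : ℝ) ≠ 0 := by positivity
    have key : genBinom ((p:ℝ)+α) (p-i) * (((p+m).choose i : ℕ):ℝ) * (-1:ℝ)^i *
        ((((p+m+j-i).choose (m+j) : ℕ):ℝ) * ((m+j).factorial : ℝ) * ((p-i).factorial : ℝ)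
          * Real.Gamma (α+(i:ℝ)+1) / (2 * Real.Gamma (α+(m:ℝ)+(j:ℝ)+(p:ℝ)+2)))
        = (Real.Gamma ((p:ℝ)+α+1) * ((m+j).factorial : ℝ) / (2*Real.Gamma (α+(m:ℝ)+(j:ℝ)+(p:ℝ)+2)))
          * ((-1:ℝ)^i * (((p+m).choose i : ℕ):ℝ) * (((p+m+j-i).choose (m+j) : ℕ):ℝ))
          * ((Real.Gamma (α+(i:ℝ)+1) * ((p-i).factorial : ℝ))
              / (Real.Gamma (α+(i:ℝ)+1) * ((p-i).factorial : ℝ))) := by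
      rw [hgb]; ring
    rw [key, div_self (mul_ne_zero hG1 hf1), mul_one]
  rw [Finset.sum_congr rfl hstep, ← Finset.mul_sum]
  -- extend sum to range (p+m+1)
  have hext : ∑ i ∈ Finset.range (p+1),
      (-1:ℝ)^i * (((p+m).choose i : ℕ):ℝ) * (((p+m+j-i).choose (m+j) : ℕ):ℝ)
      = ∑ i ∈ Finset.range (p+m+1),
      (-1:ℝ)^i * (((p+m).choose i : ℕ):ℝ) * (((p+m+j-i).choose (m+j) : ℕ):ℝ) := by
    apply Finset.sum_subset
    · apply Finset.range_subset_range.mpr; omega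
    · intro i hi hni
      simp only [Finset.mem_range] at hi hni
      have : (p+m+j-i).choose (m+j) = 0 := by
        apply Nat.choose_eq_zero_of_lt; omega
      rw [this]
      simp
  rw [hext, altV (p+m) j (m+j)]
  by_cases hjp : j = p
  · rw [if_pos (show p+m ≤ m+j by omega), show m+j-(p+m) = 0 from by omega,
      Nat.choose_zero_right, if_pos hjp, hjp, Nat.cast_one, mul_one]
    rw [show α+(m:ℝ)+(p:ℝ)+(p:ℝ)+2 = α+(m:ℝ)+2*(p:ℝ)+2 from by ring]
  · rw [if_neg (show ¬ (p+m ≤ m+j) by omega), if_neg hjp, mul_zero]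


lemma pointwise (α : ℝ) (m p q : ℕ) {ρ : ℝ} (h0 : 0 < ρ) (h1 : ρ < 1) :
    R2 α m p ρ * R2 α m q ρ * ρ * (1-ρ^2)^(-α)
    = ∑ i ∈ Finset.range (p+1), ∑ i' ∈ Finset.range (q+1), ∑ l ∈ Finset.range (i'+1),
        (genBinom ((p:ℝ)+α) (p-i) * genBinom ((p:ℝ)+(m:ℝ)) i
          * (genBinom ((q:ℝ)+α) (q-i') * genBinom ((q:ℝ)+(m:ℝ)) i')
          * ((-1:ℝ)^(l+i') * (i'.choose l : ℝ)) * (-1:ℝ)^i)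
        * (ρ^(2*(m+(p-i)+(q-i')+l)+1) * (1-ρ^2)^(α+(i:ℝ))) := by
  have hb : (0:ℝ) < 1 - ρ^2 := by nlinarith
  have hw : (1-ρ^2)^α * (1-ρ^2)^α * (1-ρ^2)^(-α) = (1-ρ^2)^α := by
    rw [← Real.rpow_add hb, ← Real.rpow_add hb]
    congr 1; ring
  have e0 : R2 α m p ρ * R2 α m q ρ * ρ * (1-ρ^2)^(-α)
      = (ρ^(2*m+1) * (1-ρ^2)^α)
        * (jacobiP p α (m:ℝ) (2*ρ^2-1) * jacobiP q α (m:ℝ) (2*ρ^2-1)) := by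
    unfold R2
    rw [show ρ^m * (1-ρ^2)^α * jacobiP p α (m:ℝ) (2*ρ^2-1)
        * (ρ^m * (1-ρ^2)^α * jacobiP q α (m:ℝ) (2*ρ^2-1)) * ρ * (1-ρ^2)^(-α)
      = ((1-ρ^2)^α * (1-ρ^2)^α * (1-ρ^2)^(-α)) * (ρ^m * ρ^m * ρ)
        * (jacobiP p α (m:ℝ) (2*ρ^2-1) * jacobiP q α (m:ℝ) (2*ρ^2-1)) from by ring]
    rw [hw, ← pow_add, ← pow_succ]
    rw [show m + m + 1 = 2*m+1 from by omega]
    ring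
  rw [e0]
  unfold jacobiP
  rw [Finset.sum_mul_sum, Finset.mul_sum]
  apply Finset.sum_congr rfl
  intro i hi
  rw [Finset.mul_sum]
  apply Finset.sum_congr rfl
  intro i' hi'
  simp only [Finset.mem_range] at hi hi'
  -- now a single (i, i') term
  have hx1 : (2*ρ^2 - 1 - 1)/2 = ρ^2 - 1 := by ring
  have hx2 : (2*ρ^2 - 1 + 1)/2 = ρ^2 := by ring
  rw [hx1, hx2]
  -- expand (ρ^2 - 1)^{i'}
  rw [sub_pow (ρ^2) 1 i']
  rw [Finset.mul_sum, Finset.sum_mul, Finset.mul_sum, Finset.mul_sum]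
  apply Finset.sum_congr rfl
  intro l hl
  simp only [Finset.mem_range] at hl
  have hgi : (ρ^2-1)^i = (-1:ℝ)^i * (1-ρ^2)^i := by
    rw [show ρ^2-1 = -(1-ρ^2) from by ring, neg_pow]
  have hri : (1-ρ^2)^(α+(i:ℝ)) = (1-ρ^2)^α * (1-ρ^2)^i := by
    rw [← Real.rpow_natCast (1-ρ^2) i, ← Real.rpow_add hb]
  have hp : ρ^(2*(m+(p-i)+(q-i')+l)+1)
      = ρ^(2*m+1) * (ρ^2)^(p-i) * (ρ^2)^(q-i') * (ρ^2)^l := by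
    rw [← pow_mul, ← pow_mul, ← pow_mul, ← pow_add, ← pow_add, ← pow_add]
    congr 1
    omega
  rw [hgi, hri, hp]
  ring


lemma iisum {ι : Type*} (s : Finset ι) (F : ι → ℝ → ℝ)
    (h : ∀ i ∈ s, IntervalIntegrable (F i) volume 0 1) :
    IntervalIntegrable (fun ρ => ∑ i ∈ s, F i ρ) volume 0 1 := by
  have h2 := IntervalIntegrable.sum s h
  have : (∑ i ∈ s, F i) = fun ρ => ∑ i ∈ s, F i ρ := by
    funext ρ; simp [Finset.sum_apply]
  rwa [this] at h2

lemma main (α : ℝ) (hα : -1 < α) (m p q : ℕ) (hqp : q ≤ p) :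
    ∫ ρ in (0:ℝ)..1, R2 α m p ρ * R2 α m q ρ * ρ * (1 - ρ ^ 2) ^ (-α)
      = if q = p then N2 α m p else 0 := by
  have hai : ∀ i : ℕ, (-1:ℝ) < α + i := by
    intro i
    have : (0:ℝ) ≤ i := Nat.cast_nonneg i
    linarith
  -- step 1 : replace integrand a.e.
  have h1 : (∫ ρ in (0:ℝ)..1, R2 α m p ρ * R2 α m q ρ * ρ * (1 - ρ ^ 2) ^ (-α))
      = ∫ ρ in (0:ℝ)..1, ∑ i ∈ Finset.range (p+1), ∑ i' ∈ Finset.range (q+1),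
          ∑ l ∈ Finset.range (i'+1),
          (genBinom ((p:ℝ)+α) (p-i) * genBinom ((p:ℝ)+(m:ℝ)) i
            * (genBinom ((q:ℝ)+α) (q-i') * genBinom ((q:ℝ)+(m:ℝ)) i')
            * ((-1:ℝ)^(l+i') * (i'.choose l : ℝ)) * (-1:ℝ)^i)
          * (ρ^(2*(m+(p-i)+(q-i')+l)+1) * (1-ρ^2)^(α+(i:ℝ))) := by
    apply intervalIntegral.integral_congr_ae
    have hne : ∀ᵐ ρ : ℝ ∂volume, ρ ≠ 1 := by
      rw [MeasureTheory.ae_iff]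
      convert Real.volume_singleton (a := 1) using 2
      ext x; simp
    filter_upwards [hne] with ρ hρ hmem
    rw [Set.uIoc_of_le (by norm_num : (0:ℝ) ≤ 1)] at hmem
    exact pointwise α m p q hmem.1 (lt_of_le_of_ne hmem.2 hρ)
  rw [h1]
  -- step 2 : integral of sums
  rw [intervalIntegral.integral_finset_sum (fun i _ => iisum _ _
    (fun i' _ => iisum _ _ (fun l _ => ((intInt _ _ (hai i)).const_mul _))))]
  -- step 3 : evaluate inner integrals
  have h3 : ∀ i ∈ Finset.range (p+1),
      (∫ ρ in (0:ℝ)..1, ∑ i' ∈ Finset.range (q+1), ∑ l ∈ Finset.range (i'+1),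
        (genBinom ((p:ℝ)+α) (p-i) * genBinom ((p:ℝ)+(m:ℝ)) i
          * (genBinom ((q:ℝ)+α) (q-i') * genBinom ((q:ℝ)+(m:ℝ)) i')
          * ((-1:ℝ)^(l+i') * (i'.choose l : ℝ)) * (-1:ℝ)^i)
        * (ρ^(2*(m+(p-i)+(q-i')+l)+1) * (1-ρ^2)^(α+(i:ℝ))))
      = ∑ i' ∈ Finset.range (q+1), ∑ l ∈ Finset.range (i'+1),
        (genBinom ((p:ℝ)+α) (p-i) * genBinom ((p:ℝ)+(m:ℝ)) i
          * (genBinom ((q:ℝ)+α) (q-i') * genBinom ((q:ℝ)+(m:ℝ)) i')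
          * ((-1:ℝ)^(l+i') * (i'.choose l : ℝ)) * (-1:ℝ)^i)
        * (((m+(p-i)+(q-i')+l).factorial : ℝ) * Real.Gamma (α+(i:ℝ)+1)
            / (2 * Real.Gamma (α+(i:ℝ) + ((m+(p-i)+(q-i')+l : ℕ):ℝ) + 2))) := by
    intro i _
    rw [intervalIntegral.integral_finset_sum (fun i' _ => iisum _ _
      (fun l _ => ((intInt _ _ (hai i)).const_mul _)))]
    apply Finset.sum_congr rfl
    intro i' _
    rw [intervalIntegral.integral_finset_sum (fun l _ => ((intInt _ _ (hai i)).const_mul _))]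
    apply Finset.sum_congr rfl
    intro l _
    rw [intervalIntegral.integral_const_mul, AInt _ _ (hai i)]
  rw [Finset.sum_congr rfl h3]
  -- step 4 : reorganize and apply Msum
  rw [Finset.sum_comm]
  have h4 : ∀ i' ∈ Finset.range (q+1),
      (∑ i ∈ Finset.range (p+1), ∑ l ∈ Finset.range (i'+1),
        (genBinom ((p:ℝ)+α) (p-i) * genBinom ((p:ℝ)+(m:ℝ)) i
          * (genBinom ((q:ℝ)+α) (q-i') * genBinom ((q:ℝ)+(m:ℝ)) i')
          * ((-1:ℝ)^(l+i') * (i'.choose l : ℝ)) * (-1:ℝ)^i)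
        * (((m+(p-i)+(q-i')+l).factorial : ℝ) * Real.Gamma (α+(i:ℝ)+1)
            / (2 * Real.Gamma (α+(i:ℝ) + ((m+(p-i)+(q-i')+l : ℕ):ℝ) + 2))))
      = ∑ l ∈ Finset.range (i'+1),
          (genBinom ((q:ℝ)+α) (q-i') * genBinom ((q:ℝ)+(m:ℝ)) i'
            * ((-1:ℝ)^(l+i') * (i'.choose l : ℝ)))
          * (if q-i'+l = p then Real.Gamma ((p:ℝ)+α+1) * (((m+p).factorial : ℕ):ℝ)
              / (2*Real.Gamma (α+(m:ℝ)+2*(p:ℝ)+2)) else 0) := by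
    intro i' hi'
    simp only [Finset.mem_range] at hi'
    rw [Finset.sum_comm]
    apply Finset.sum_congr rfl
    intro l hl
    simp only [Finset.mem_range] at hl
    have hj : q - i' + l ≤ p := by omega
    rw [← Msum α hα m p (q-i'+l) hj, Finset.mul_sum]
    apply Finset.sum_congr rfl
    intro i hi
    simp only [Finset.mem_range] at hi
    have e1 : m+(p-i)+(q-i')+l = m+(q-i'+l)+(p-i) := by omega
    rw [e1]
    have e2 : genBinom ((p:ℝ)+(m:ℝ)) i = (((p+m).choose i : ℕ):ℝ) := by
      rw [show (p:ℝ)+(m:ℝ) = ((p+m:ℕ):ℝ) from by push_cast; ring, gbNat]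
    rw [e2]
    ring
  rw [Finset.sum_congr rfl h4]
  by_cases hqp' : q = p
  · subst hqp'
    rw [if_pos rfl]
    have h5 : ∀ i' ∈ Finset.range (q+1),
        (∑ l ∈ Finset.range (i'+1),
          (genBinom ((q:ℝ)+α) (q-i') * genBinom ((q:ℝ)+(m:ℝ)) i'
            * ((-1:ℝ)^(l+i') * (i'.choose l : ℝ)))
          * (if q-i'+l = q then Real.Gamma ((q:ℝ)+α+1) * (((m+q).factorial : ℕ):ℝ)
              / (2*Real.Gamma (α+(m:ℝ)+2*(q:ℝ)+2)) else 0))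
        = (genBinom ((q:ℝ)+α) (q-i') * (((q+m).choose i' : ℕ):ℝ))
          * (Real.Gamma ((q:ℝ)+α+1) * (((m+q).factorial : ℕ):ℝ)
              / (2*Real.Gamma (α+(m:ℝ)+2*(q:ℝ)+2))) := by
      intro i' hi'
      simp only [Finset.mem_range] at hi'
      rw [Finset.sum_eq_single i']
      · rw [if_pos (by omega)]
        have e3 : genBinom ((q:ℝ)+(m:ℝ)) i' = (((q+m).choose i' : ℕ):ℝ) := by
          rw [show (q:ℝ)+(m:ℝ) = ((q+m:ℕ):ℝ) from by push_cast; ring, gbNat]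
        rw [e3, Nat.choose_self, Even.neg_one_pow ⟨i', rfl⟩]
        push_cast
        ring
      · intro l hl hne
        simp only [Finset.mem_range] at hl
        rw [if_neg (by omega), mul_zero]
      · intro h
        exact absurd (Finset.self_mem_range_succ i') h
    rw [Finset.sum_congr rfl h5, ← Finset.sum_mul, vand (q+m) q ((q:ℝ)+α)]
    have hx : (0:ℝ) < (q:ℝ)+(m:ℝ)+α+1 := by
      have h1 : (0:ℝ) ≤ q := Nat.cast_nonneg q
      have h2 : (0:ℝ) ≤ m := Nat.cast_nonneg m
      linarith
    have h6 : genBinom ((q:ℝ)+α+((q+m:ℕ):ℝ)) q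
        = Real.Gamma ((q:ℝ)+(m:ℝ)+α+1+(q:ℝ)) / (Real.Gamma ((q:ℝ)+(m:ℝ)+α+1) * (q.factorial : ℝ)) := by
      have h := gbGamma ((q:ℝ)+(m:ℝ)+α+1) hx q
      rw [show (q:ℝ)+(m:ℝ)+α+1+(q:ℝ)-1 = (q:ℝ)+α+((q+m:ℕ):ℝ) from by push_cast; ring] at h
      exact h
    rw [h6]
    unfold N2 pochG
    have hX : (0:ℝ) < α+(m:ℝ)+2*(q:ℝ)+1 := by
      have h1 : (0:ℝ) ≤ q := Nat.cast_nonneg q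
      have h2 : (0:ℝ) ≤ m := Nat.cast_nonneg m
      linarith
    rw [show α+(m:ℝ)+2*(q:ℝ)+2 = (α+(m:ℝ)+2*(q:ℝ)+1) + 1 from by ring,
      Real.Gamma_add_one hX.ne']
    rw [show (q:ℝ)+(m:ℝ)+α+1+(q:ℝ) = α+(m:ℝ)+2*(q:ℝ)+1 from by ring]
    rw [show ((m+2*q : ℕ):ℝ)+α+1 = α+(m:ℝ)+2*(q:ℝ)+1 from by push_cast; ring]
    rw [show (q:ℝ)+1+α = (q:ℝ)+α+1 from by ring]
    rw [show (q:ℝ)+(m:ℝ)+1+α = (q:ℝ)+(m:ℝ)+α+1 from by ring]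
    rw [show (q:ℝ)+(m:ℝ)+1 = ((q+m:ℕ):ℝ)+1 from by push_cast; ring]
    rw [Real.Gamma_nat_eq_factorial, Real.Gamma_nat_eq_factorial]
    rw [show ((m+q).factorial : ℕ) = ((q+m).factorial : ℕ) from by rw [Nat.add_comm]]
    have hg1 : Real.Gamma (α+(m:ℝ)+2*(q:ℝ)+1) ≠ 0 := (Real.Gamma_pos_of_pos (by linarith)).ne'
    have hg2 : Real.Gamma ((q:ℝ)+(m:ℝ)+α+1) ≠ 0 := (Real.Gamma_pos_of_pos hx).ne'
    have hg3 : Real.Gamma ((q:ℝ)+α+1) ≠ 0 := by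
      apply (Real.Gamma_pos_of_pos _).ne'
      have h1 : (0:ℝ) ≤ q := Nat.cast_nonneg q
      linarith
    have hf1 : (q.factorial : ℝ) ≠ 0 := by positivity
    have hf2 : ((q+m).factorial : ℝ) ≠ 0 := by positivity
    field_simp
  · rw [if_neg hqp']
    apply Finset.sum_eq_zero
    intro i' hi'
    simp only [Finset.mem_range] at hi'
    apply Finset.sum_eq_zero
    intro l hl
    simp only [Finset.mem_range] at hl
    rw [if_neg (by omega), mul_zero]



/-- orthogonality of the generalized 2D Zernike radial functions. -/
theorem stmt1 (α : ℝ) (hα : -1 < α) (m p₁ p₂ : ℕ) :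
    ∫ ρ in (0:ℝ)..1, R2 α m p₁ ρ * R2 α m p₂ ρ * ρ * (1 - ρ ^ 2) ^ (-α)
      = if m + 2 * p₁ = m + 2 * p₂ then N2 α m p₁ else 0 := by

  rcases le_total p₂ p₁ with h | h
  · rw [main α hα m p₁ p₂ h]
    by_cases h2 : p₂ = p₁
    · rw [if_pos h2, if_pos (by omega)]
    · rw [if_neg h2, if_neg (by omega)]
  · have hswap : (∫ ρ in (0:ℝ)..1, R2 α m p₁ ρ * R2 α m p₂ ρ * ρ * (1 - ρ ^ 2) ^ (-α))
        = ∫ ρ in (0:ℝ)..1, R2 α m p₂ ρ * R2 α m p₁ ρ * ρ * (1 - ρ ^ 2) ^ (-α) := by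
      apply intervalIntegral.integral_congr
      intro ρ _
      ring
    rw [hswap, main α hα m p₂ p₁ h]
    by_cases h2 : p₁ = p₂
    · rw [if_pos h2, if_pos (by omega), h2]
    · rw [if_neg h2, if_neg (by omega)]
end

section
/- Let α > −1 be real and define, for integers n, l ≥ 0 and 0 ≤ ρ ≤ 1, I_{nl}^{α}(ρ) = (1/2) ∫_{−1}^{1} C_n^{α+3/2}(ρt) P_l(t) dt, with the convention I_{−1,l}^{α} = 0. Then for all integers n, l ≥ 0 with n + 1 − l even and nonnegative, I_{n+1,l}^{α}(ρ) = ((n+α+3/2)/(n+1)) · ρ · [ ((l+1)/(l+1/2)) I_{n,l+1}^{α}(ρ) + (l/(l+1/2)) I_{n,l−1}^{α}(ρ) ] − ((n+2α+2)/(n+1)) I_{n−1,l}^{α}(ρ). -/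
open Real MeasureTheory

/-- `I_{nl}^α(ρ) = ½ ∫_{−1}^1 C_n^{α+3/2}(ρt) P_l(t) dt`, with the convention `I_{−1,l}^α = 0`. -/
noncomputable def Ifun (α : ℝ) (n : ℤ) (l : ℕ) (ρ : ℝ) : ℝ :=
  if n < 0 then 0
  else 1 / 2 * ∫ t in (-1:ℝ)..1, gegenbauer n.toNat (α + 3 / 2) (ρ * t) * legendreFun l t

noncomputable def Gc (lam : ℝ) (k d : ℕ) : ℝ :=
  (-1) ^ k * Real.Gamma (((k + d : ℕ) : ℝ) + lam) /
    (Real.Gamma lam * (Nat.factorial k : ℝ) * (Nat.factorial d : ℝ))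

lemma geg_even (lam x : ℝ) (m : ℕ) :
    gegenbauer (2 * m) lam x = ∑ i ∈ Finset.range (m + 1), Gc lam (m - i) (2 * i) * (2 * x) ^ (2 * i) := by
  unfold gegenbauer Gc
  have h2 : 2 * m / 2 = m := by omega
  rw [h2, ← Finset.sum_range_reflect]
  refine Finset.sum_congr rfl fun i hi => ?_
  simp only [Finset.mem_range] at hi
  have e1 : m + 1 - 1 - i = m - i := by omega
  have e2 : 2 * m - (m - i) = (m - i) + 2 * i := by omega
  have e3 : 2 * m - 2 * (m - i) = 2 * i := by omega
  rw [e1, e2, e3]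

lemma geg_odd (lam x : ℝ) (m : ℕ) :
    gegenbauer (2 * m + 1) lam x = ∑ i ∈ Finset.range (m + 1), Gc lam (m - i) (2 * i + 1) * (2 * x) ^ (2 * i + 1) := by
  unfold gegenbauer Gc
  have h2 : (2 * m + 1) / 2 = m := by omega
  rw [h2, ← Finset.sum_range_reflect]
  refine Finset.sum_congr rfl fun i hi => ?_
  simp only [Finset.mem_range] at hi
  have e1 : m + 1 - 1 - i = m - i := by omega
  have e2 : 2 * m + 1 - (m - i) = (m - i) + (2 * i + 1) := by omega
  have e3 : 2 * m + 1 - 2 * (m - i) = 2 * i + 1 := by omega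
  rw [e1, e2, e3]

variable {lam : ℝ}

lemma Gamma_ne (hlam : 0 < lam) : Real.Gamma lam ≠ 0 := (Real.Gamma_pos_of_pos hlam).ne'

lemma Gamma_shift (hlam : 0 < lam) (j : ℕ) :
    Real.Gamma (((j : ℝ) + 1) + lam) = ((j : ℝ) + lam) * Real.Gamma ((j : ℝ) + lam) := by
  have h : ((j : ℝ) + lam) ≠ 0 := by positivity
  rw [show ((j : ℝ) + 1) + lam = ((j : ℝ) + lam) + 1 by ring, Real.Gamma_add_one h]

lemma gc0 (hlam : 0 < lam) (d : ℕ) :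
    ((d : ℝ) + 1) * Gc lam 0 (d + 1) = ((d : ℝ) + lam) * Gc lam 0 d := by
  unfold Gc
  have h := Gamma_shift hlam d
  push_cast [Nat.factorial_succ] at *
  rw [show (0:ℝ) + ((d:ℝ) + 1) + lam = (↑d + 1 + lam) by ring, h,
    show (0:ℝ) + (d:ℝ) + lam = ((d:ℝ) + lam) by ring]
  have h1 : ((d : ℝ) + 1) ≠ 0 := by positivity
  have h2 : (Nat.factorial d : ℝ) ≠ 0 := Nat.cast_ne_zero.2 (Nat.factorial_ne_zero d)
  field_simp

lemma gcT (hlam : 0 < lam) (k : ℕ) :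
    ((2 * k : ℝ) + 2) * Gc lam (k + 1) 0 = -((2 * k : ℝ) + 2 * lam) * Gc lam k 0 := by
  unfold Gc
  have h := Gamma_shift hlam k
  push_cast [Nat.factorial_succ] at *
  rw [show (k:ℝ) + 1 + 0 + lam = (↑k + 1 + lam) by ring, h,
    show (k:ℝ) + 0 + lam = ((k:ℝ) + lam) by ring]
  have h1 : ((k : ℝ) + 1) ≠ 0 := by positivity
  have h2 : (Nat.factorial k : ℝ) ≠ 0 := Nat.cast_ne_zero.2 (Nat.factorial_ne_zero k)
  have h3 := Gamma_ne hlam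
  field_simp
  ring

lemma gcM (hlam : 0 < lam) (k d : ℕ) :
    ((2 * k + d : ℝ) + 3) * Gc lam (k + 1) (d + 1)
      = ((2 * k + d : ℝ) + 2 + lam) * Gc lam (k + 1) d
        - ((2 * k + d : ℝ) + 2 * lam + 1) * Gc lam k (d + 1) := by
  unfold Gc
  have h := Gamma_shift hlam (k + d + 1)
  push_cast [Nat.factorial_succ] at *
  have e1 : ((k : ℝ) + 1 + (d + 1)) + lam = (((k : ℝ) + d + 1) + 1) + lam := by ring
  have e2 : ((k : ℝ) + 1 + d) + lam = ((k : ℝ) + d + 1) + lam := by ring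
  have e3 : ((k : ℝ) + (d + 1)) + lam = ((k : ℝ) + d + 1) + lam := by ring
  rw [e1, e2, e3, h]
  have h1 : ((k : ℝ) + 1) ≠ 0 := by positivity
  have h1' : ((d : ℝ) + 1) ≠ 0 := by positivity
  have h2 : (Nat.factorial k : ℝ) ≠ 0 := Nat.cast_ne_zero.2 (Nat.factorial_ne_zero k)
  have h2' : (Nat.factorial d : ℝ) ≠ 0 := Nat.cast_ne_zero.2 (Nat.factorial_ne_zero d)
  have h3 := Gamma_ne hlam
  field_simp
  ring

lemma gegen_rec_even (hlam : 0 < lam) (m : ℕ) (x : ℝ) :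
    ((2 * m : ℝ) + 3) * gegenbauer (2 * (m + 1) + 1) lam x
      = 2 * ((2 * m : ℝ) + 2 + lam) * x * gegenbauer (2 * (m + 1)) lam x
        - ((2 * m : ℝ) + 2 * lam + 1) * gegenbauer (2 * m + 1) lam x := by
  rw [geg_even, geg_odd, geg_odd, Finset.mul_sum, Finset.mul_sum, Finset.mul_sum]
  rw [Finset.sum_range_succ (fun i => ((2 * m : ℝ) + 3) * (Gc lam (m + 1 - i) (2 * i + 1) * (2 * x) ^ (2 * i + 1))),
    Finset.sum_range_succ (fun i => 2 * ((2 * m : ℝ) + 2 + lam) * x * (Gc lam (m + 1 - i) (2 * i) * (2 * x) ^ (2 * i)))]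
  have htop : ((2 * m : ℝ) + 3) * (Gc lam (m + 1 - (m + 1)) (2 * (m + 1) + 1) * (2 * x) ^ (2 * (m + 1) + 1))
      = 2 * ((2 * m : ℝ) + 2 + lam) * x * (Gc lam (m + 1 - (m + 1)) (2 * (m + 1)) * (2 * x) ^ (2 * (m + 1))) := by
    rw [show m + 1 - (m + 1) = 0 from by omega]
    have h0 := gc0 hlam (2 * (m + 1))
    push_cast at h0
    linear_combination (2 * x) ^ (2 * (m + 1)) * (2 * x) * h0
  rw [htop]
  have hbulk : ∀ i ∈ Finset.range (m + 1),
      ((2 * m : ℝ) + 3) * (Gc lam (m + 1 - i) (2 * i + 1) * (2 * x) ^ (2 * i + 1))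
        = 2 * ((2 * m : ℝ) + 2 + lam) * x * (Gc lam (m + 1 - i) (2 * i) * (2 * x) ^ (2 * i))
          - ((2 * m : ℝ) + 2 * lam + 1) * (Gc lam (m - i) (2 * i + 1) * (2 * x) ^ (2 * i + 1)) := by
    intro i hi
    simp only [Finset.mem_range] at hi
    rw [show m + 1 - i = (m - i) + 1 from by omega]
    have hm := gcM hlam (m - i) (2 * i)
    have ec2 : (((m - i : ℕ) : ℝ)) = (m : ℝ) - i := by rw [Nat.cast_sub (by omega)]
    rw [ec2] at hm
    push_cast at hm
    linear_combination (2 * x) ^ (2 * i) * (2 * x) * hm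
  rw [Finset.sum_congr rfl hbulk, Finset.sum_sub_distrib]
  ring

lemma gegen_rec_odd (hlam : 0 < lam) (m : ℕ) (x : ℝ) :
    ((2 * m : ℝ) + 2) * gegenbauer (2 * (m + 1)) lam x
      = 2 * ((2 * m : ℝ) + 1 + lam) * x * gegenbauer (2 * m + 1) lam x
        - ((2 * m : ℝ) + 2 * lam) * gegenbauer (2 * m) lam x := by
  rw [geg_even, geg_odd, geg_even, Finset.mul_sum, Finset.mul_sum, Finset.mul_sum]
  rw [Finset.sum_range_succ' (fun i => ((2 * m : ℝ) + 2) * (Gc lam (m + 1 - i) (2 * i) * (2 * x) ^ (2 * i))),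
    Finset.sum_range_succ (fun i => ((2 * m : ℝ) + 2) * (Gc lam (m + 1 - (i + 1)) (2 * (i + 1)) * (2 * x) ^ (2 * (i + 1)))),
    Finset.sum_range_succ (fun i => 2 * ((2 * m : ℝ) + 1 + lam) * x * (Gc lam (m - i) (2 * i + 1) * (2 * x) ^ (2 * i + 1))),
    Finset.sum_range_succ' (fun i => ((2 * m : ℝ) + 2 * lam) * (Gc lam (m - i) (2 * i) * (2 * x) ^ (2 * i)))]
  have hbot : ((2 * m : ℝ) + 2) * (Gc lam (m + 1 - 0) (2 * 0) * (2 * x) ^ (2 * 0))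
      = - (((2 * m : ℝ) + 2 * lam) * (Gc lam (m - 0) (2 * 0) * (2 * x) ^ (2 * 0))) := by
    rw [show m + 1 - 0 = m + 1 from rfl, show m - 0 = m from rfl]
    have h0 := gcT hlam m
    push_cast at h0
    linear_combination h0
  have htop : ((2 * m : ℝ) + 2) * (Gc lam (m + 1 - (m + 1)) (2 * (m + 1)) * (2 * x) ^ (2 * (m + 1)))
      = 2 * ((2 * m : ℝ) + 1 + lam) * x * (Gc lam (m - m) (2 * m + 1) * (2 * x) ^ (2 * m + 1)) := by
    rw [show m + 1 - (m + 1) = 0 from by omega, show m - m = 0 from by omega,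
      show 2 * (m + 1) = (2 * m + 1) + 1 from by omega]
    have h0 := gc0 hlam (2 * m + 1)
    push_cast at h0
    linear_combination (2 * x) ^ (2 * m + 1) * (2 * x) * h0
  have hbulk : ∀ i ∈ Finset.range m,
      ((2 * m : ℝ) + 2) * (Gc lam (m + 1 - (i + 1)) (2 * (i + 1)) * (2 * x) ^ (2 * (i + 1)))
        = 2 * ((2 * m : ℝ) + 1 + lam) * x * (Gc lam (m - i) (2 * i + 1) * (2 * x) ^ (2 * i + 1))
          - ((2 * m : ℝ) + 2 * lam) * (Gc lam (m - (i + 1)) (2 * (i + 1)) * (2 * x) ^ (2 * (i + 1))) := by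
    intro i hi
    simp only [Finset.mem_range] at hi
    rw [show m + 1 - (i + 1) = (m - (i + 1)) + 1 from by omega,
      show m - i = (m - (i + 1)) + 1 from by omega,
      show 2 * (i + 1) = (2 * i + 1) + 1 from by omega]
    have hm' := gcM hlam (m - (i + 1)) (2 * i + 1)
    have ec2 : (((m - (i + 1) : ℕ) : ℝ)) = (m : ℝ) - (i + 1) := by rw [Nat.cast_sub (by omega)]; push_cast; ring
    rw [ec2] at hm'
    push_cast at hm'
    linear_combination (2 * x) ^ (2 * i + 1) * (2 * x) * hm'
  rw [Finset.sum_congr rfl hbulk, Finset.sum_sub_distrib, htop, hbot]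
  ring

lemma geg_zero (hlam : 0 < lam) (x : ℝ) : gegenbauer 0 lam x = 1 := by
  unfold gegenbauer
  simp [Gamma_ne hlam]

lemma geg_one (hlam : 0 < lam) (x : ℝ) : gegenbauer 1 lam x = 2 * lam * x := by
  unfold gegenbauer
  rw [show (1 : ℕ) / 2 + 1 = 1 from rfl, Finset.sum_range_one]
  norm_num
  rw [show (1:ℝ) + lam = lam + 1 from by ring, Real.Gamma_add_one (by positivity : lam ≠ 0)]
  field_simp [Gamma_ne hlam]

lemma gegen_rec (hlam : 0 < lam) (n : ℕ) (x : ℝ) :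
    ((n : ℝ) + 2) * gegenbauer (n + 2) lam x
      = 2 * ((n : ℝ) + 1 + lam) * x * gegenbauer (n + 1) lam x
        - ((n : ℝ) + 2 * lam) * gegenbauer n lam x := by
  rcases Nat.even_or_odd n with ⟨m, hm⟩ | ⟨m, hm⟩
  · subst hm
    have h := gegen_rec_odd hlam m x
    rw [show 2 * (m + 1) = m + m + 2 from by omega, show 2 * m + 1 = m + m + 1 from by omega,
      show 2 * m = m + m from by omega] at h
    push_cast at h ⊢
    linarith [h]
  · subst hm
    have h := gegen_rec_even hlam m x
    rw [show 2 * (m + 1) + 1 = 2 * m + 1 + 2 from by omega, show 2 * (m + 1) = 2 * m + 1 + 1 from by omega] at h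
    push_cast at h ⊢
    linarith [h]

noncomputable def cL (l : ℕ) (k : ℤ) : ℝ :=
  if 0 ≤ k then ((l.choose k.toNat : ℕ) : ℝ) ^ 2 else 0

lemma cL_nat (l j : ℕ) : cL l (j : ℤ) = ((l.choose j : ℕ) : ℝ) ^ 2 := by
  simp [cL]

lemma cL_neg (l : ℕ) (k : ℤ) (h : k < 0) : cL l k = 0 := by
  simp [cL, not_le.2 h]

lemma cL_big (l j : ℕ) (h : l < j) : cL l (j : ℤ) = 0 := by
  rw [cL_nat, Nat.choose_eq_zero_of_lt h]
  norm_num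

lemma legendre_eq (l : ℕ) (x : ℝ) :
    legendreFun l x = ∑ k ∈ Finset.range (l + 1),
      cL l k * ((x - 1) / 2) ^ (l - k) * ((x + 1) / 2) ^ k := by
  unfold legendreFun
  rw [Finset.mul_sum]
  refine Finset.sum_congr rfl fun k hk => ?_
  simp only [Finset.mem_range] at hk
  rw [cL_nat, div_pow, div_pow]
  have h2 : ((2:ℝ)) ^ (l - k) * 2 ^ k = 2 ^ l := by
    rw [← pow_add, show l - k + k = l from by omega]
  rw [show (↑(l.choose k) : ℝ) ^ 2 * ((x - 1) ^ (l - k) / 2 ^ (l - k)) * ((x + 1) ^ k / 2 ^ k)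
      = ↑(l.choose k) ^ 2 * ((x - 1) ^ (l - k) * (x + 1) ^ k) / (2 ^ (l - k) * 2 ^ k) from by ring,
    h2]
  ring

lemma mul_u (u v : ℝ) (N : ℕ) (c : ℤ → ℝ) (h : c ((N : ℤ) + 1) = 0) :
    u * ∑ k ∈ Finset.range (N + 1), c (k : ℤ) * u ^ (N - k) * v ^ k
      = ∑ k ∈ Finset.range (N + 2), c (k : ℤ) * u ^ (N + 1 - k) * v ^ k := by
  rw [Finset.sum_range_succ (fun k => c (k : ℤ) * u ^ (N + 1 - k) * v ^ k) (N + 1),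
    show (((N + 1 : ℕ) : ℤ)) = (N : ℤ) + 1 from by push_cast; ring, h, Finset.mul_sum]
  simp only [zero_mul, add_zero]
  refine Finset.sum_congr rfl fun k hk => ?_
  simp only [Finset.mem_range] at hk
  rw [show N + 1 - k = (N - k) + 1 from by omega, pow_succ]
  ring

lemma mul_v (u v : ℝ) (N : ℕ) (c : ℤ → ℝ) (h : c (-1) = 0) :
    v * ∑ k ∈ Finset.range (N + 1), c (k : ℤ) * u ^ (N - k) * v ^ k
      = ∑ k ∈ Finset.range (N + 2), c ((k : ℤ) - 1) * u ^ (N + 1 - k) * v ^ k := by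
  rw [Finset.sum_range_succ' (fun k => c ((k : ℤ) - 1) * u ^ (N + 1 - k) * v ^ k) (N + 1)]
  simp only [Nat.cast_zero, zero_sub, h, zero_mul, add_zero, Finset.mul_sum]
  refine Finset.sum_congr rfl fun k hk => ?_
  simp only [Finset.mem_range] at hk
  rw [show (((k + 1 : ℕ) : ℤ)) - 1 = (k : ℤ) from by push_cast; ring,
    show N + 1 - (k + 1) = N - k from by omega, pow_succ]
  ring

lemma choose_key (a b : ℕ) : (((a + b).choose a : ℕ) : ℝ)
    = (Nat.factorial (a + b) : ℝ) / ((Nat.factorial a : ℝ) * (Nat.factorial b : ℝ)) := by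
  rw [Nat.cast_choose ℝ (Nat.le_add_right a b), Nat.add_sub_cancel_left]

lemma K2 (m : ℕ) (k : ℕ) :
    ((2 * m : ℝ) + 3) * (cL (m + 1) (k : ℤ) + cL (m + 1) ((k : ℤ) - 1))
      = ((m : ℝ) + 2) * cL (m + 2) (k : ℤ)
        + ((m : ℝ) + 1) * (cL m (k : ℤ) - 2 * cL m ((k : ℤ) - 1) + cL m ((k : ℤ) - 2)) := by
  match k with
  | 0 =>
      norm_num [cL]
      ring
  | 1 =>
      have e1 : ((1 : ℕ) : ℤ) - 1 = ((0 : ℕ) : ℤ) := by norm_num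
      have e2 : ((1 : ℕ) : ℤ) - 2 = -1 := by norm_num
      rw [e1, e2, cL_nat, cL_nat, cL_nat, cL_nat, cL_nat, cL_neg m (-1) (by norm_num)]
      simp [Nat.choose_one_right]
      push_cast
      ring
  | (i + 2) =>
      have e1 : (((i + 2 : ℕ)) : ℤ) - 1 = ((i + 1 : ℕ) : ℤ) := by push_cast; ring
      have e2 : (((i + 2 : ℕ)) : ℤ) - 2 = ((i : ℕ) : ℤ) := by push_cast; ring
      rw [e1, e2, cL_nat, cL_nat, cL_nat, cL_nat, cL_nat, cL_nat]
      rcases Nat.lt_trichotomy m i with him | him | him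
      · -- m < i : all six vanish
        rw [Nat.choose_eq_zero_of_lt (show m + 1 < i + 2 from by omega),
          Nat.choose_eq_zero_of_lt (show m + 1 < i + 1 from by omega),
          Nat.choose_eq_zero_of_lt (show m + 2 < i + 2 from by omega),
          Nat.choose_eq_zero_of_lt (show m < i + 2 from by omega),
          Nat.choose_eq_zero_of_lt (show m < i + 1 from by omega),
          Nat.choose_eq_zero_of_lt (show m < i from him)]
        norm_num
      · -- m = i
        subst him
        rw [Nat.choose_eq_zero_of_lt (show m + 1 < m + 2 from by omega),
          Nat.choose_self (m + 1),
          Nat.choose_self (m + 2),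
          Nat.choose_eq_zero_of_lt (show m < m + 2 from by omega),
          Nat.choose_eq_zero_of_lt (show m < m + 1 from by omega),
          Nat.choose_self m]
        push_cast; ring
      · rcases Nat.lt_or_ge m (i + 2) with him2 | him2
        · -- m = i + 1
          have hmi : m = i + 1 := by omega
          subst hmi
          rw [show i + 1 + 1 = i + 2 from rfl, show i + 1 + 2 = i + 3 from rfl,
            Nat.choose_self (i + 2),
            show (i + 2).choose (i + 1) = i + 2 from Nat.choose_succ_self_right (i + 1),
            show (i + 3).choose (i + 2) = i + 3 from Nat.choose_succ_self_right (i + 2),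
            Nat.choose_eq_zero_of_lt (show i + 1 < i + 2 from by omega),
            Nat.choose_self (i + 1),
            show (i + 1).choose i = i + 1 from Nat.choose_succ_self_right i]
          push_cast; ring
        · -- m >= i + 2 : factorial computation
          obtain ⟨s, rfl⟩ : ∃ s, m = i + 2 + s := ⟨m - (i + 2), by omega⟩
          have c1 : ((i + 2 + s + 1).choose (i + 2) : ℝ)
              = (Nat.factorial ((i + 2) + (s + 1)) : ℝ) / (Nat.factorial (i + 2) * Nat.factorial (s + 1)) := by
            rw [show i + 2 + s + 1 = (i + 2) + (s + 1) from by omega, choose_key]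
          have c2 : ((i + 2 + s + 1).choose (i + 1) : ℝ)
              = (Nat.factorial ((i + 1) + (s + 2)) : ℝ) / (Nat.factorial (i + 1) * Nat.factorial (s + 2)) := by
            rw [show i + 2 + s + 1 = (i + 1) + (s + 2) from by omega, choose_key]
          have c3 : ((i + 2 + s + 2).choose (i + 2) : ℝ)
              = (Nat.factorial ((i + 2) + (s + 2)) : ℝ) / (Nat.factorial (i + 2) * Nat.factorial (s + 2)) := by
            rw [show i + 2 + s + 2 = (i + 2) + (s + 2) from by omega, choose_key]
          have c4 : ((i + 2 + s).choose (i + 2) : ℝ)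
              = (Nat.factorial ((i + 2) + s) : ℝ) / (Nat.factorial (i + 2) * Nat.factorial s) := by
            rw [show i + 2 + s = (i + 2) + s from rfl, choose_key]
          have c5 : ((i + 2 + s).choose (i + 1) : ℝ)
              = (Nat.factorial ((i + 1) + (s + 1)) : ℝ) / (Nat.factorial (i + 1) * Nat.factorial (s + 1)) := by
            rw [show i + 2 + s = (i + 1) + (s + 1) from by omega, choose_key]
          have c6 : ((i + 2 + s).choose i : ℝ)
              = (Nat.factorial (i + (s + 2)) : ℝ) / (Nat.factorial i * Nat.factorial (s + 2)) := by
            rw [show i + 2 + s = i + (s + 2) from by omega, choose_key]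
          rw [c1, c2, c3, c4, c5, c6]
          -- express all factorials in terms of i!, s!, (i+s+2)!
          have f1 : (Nat.factorial ((i + 2) + (s + 1)) : ℝ) = ((i : ℝ) + s + 3) * (Nat.factorial (i + s + 2) : ℝ) := by
            rw [show (i + 2) + (s + 1) = (i + s + 2) + 1 from by omega, Nat.factorial_succ]; push_cast; ring
          have f2 : (Nat.factorial ((i + 1) + (s + 2)) : ℝ) = ((i : ℝ) + s + 3) * (Nat.factorial (i + s + 2) : ℝ) := by
            rw [show (i + 1) + (s + 2) = (i + s + 2) + 1 from by omega, Nat.factorial_succ]; push_cast; ring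
          have f3 : (Nat.factorial ((i + 2) + (s + 2)) : ℝ)
              = ((i : ℝ) + s + 4) * ((i : ℝ) + s + 3) * (Nat.factorial (i + s + 2) : ℝ) := by
            rw [show (i + 2) + (s + 2) = ((i + s + 2) + 1) + 1 from by omega, Nat.factorial_succ,
              Nat.factorial_succ]; push_cast; ring
          have f4 : (Nat.factorial ((i + 2) + s) : ℝ) = (Nat.factorial (i + s + 2) : ℝ) := by
            rw [show (i + 2) + s = i + s + 2 from by omega]
          have f5 : (Nat.factorial ((i + 1) + (s + 1)) : ℝ) = (Nat.factorial (i + s + 2) : ℝ) := by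
            rw [show (i + 1) + (s + 1) = i + s + 2 from by omega]
          have f6 : (Nat.factorial (i + (s + 2)) : ℝ) = (Nat.factorial (i + s + 2) : ℝ) := by
            rw [show i + (s + 2) = i + s + 2 from by omega]
          have g1 : (Nat.factorial (i + 2) : ℝ) = ((i : ℝ) + 2) * ((i : ℝ) + 1) * (Nat.factorial i : ℝ) := by
            rw [show i + 2 = (i + 1) + 1 from rfl, Nat.factorial_succ, Nat.factorial_succ]; push_cast; ring
          have g2 : (Nat.factorial (i + 1) : ℝ) = ((i : ℝ) + 1) * (Nat.factorial i : ℝ) := by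
            rw [Nat.factorial_succ]; push_cast; ring
          have g3 : (Nat.factorial (s + 2) : ℝ) = ((s : ℝ) + 2) * ((s : ℝ) + 1) * (Nat.factorial s : ℝ) := by
            rw [show s + 2 = (s + 1) + 1 from rfl, Nat.factorial_succ, Nat.factorial_succ]; push_cast; ring
          have g4 : (Nat.factorial (s + 1) : ℝ) = ((s : ℝ) + 1) * (Nat.factorial s : ℝ) := by
            rw [Nat.factorial_succ]; push_cast; ring
          rw [f1, f2, f3, f4, f5, f6, g1, g2, g3, g4]
          have hi : (Nat.factorial i : ℝ) ≠ 0 := Nat.cast_ne_zero.2 (Nat.factorial_ne_zero i)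
          have hs : (Nat.factorial s : ℝ) ≠ 0 := Nat.cast_ne_zero.2 (Nat.factorial_ne_zero s)
          have h1 : ((i : ℝ) + 1) ≠ 0 := by positivity
          have h2 : ((i : ℝ) + 2) ≠ 0 := by positivity
          have h3 : ((s : ℝ) + 1) ≠ 0 := by positivity
          have h4 : ((s : ℝ) + 2) ≠ 0 := by positivity
          push_cast
          field_simp
          ring

lemma legendre_rec_succ (m : ℕ) (x : ℝ) :
    ((2 * m : ℝ) + 3) * (x * legendreFun (m + 1) x)
      = ((m : ℝ) + 2) * legendreFun (m + 2) x + ((m : ℝ) + 1) * legendreFun m x := by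
  have hsplit : ∀ S : ℝ, x * S = (x - 1) / 2 * S + (x + 1) / 2 * S := fun S => by ring
  have htop1 : cL (m + 1) (((m + 1 : ℕ) : ℤ) + 1) = 0 := by
    rw [show ((m + 1 : ℕ) : ℤ) + 1 = ((m + 2 : ℕ) : ℤ) from by push_cast; ring]
    exact cL_big (m + 1) (m + 2) (by omega)
  have htop0 : cL m (((m : ℕ) : ℤ) + 1) = 0 := by
    rw [show ((m : ℕ) : ℤ) + 1 = ((m + 1 : ℕ) : ℤ) from by push_cast; ring]
    exact cL_big m (m + 1) (by omega)
  have e1 : x * legendreFun (m + 1) x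
      = ∑ k ∈ Finset.range (m + 3),
          (cL (m + 1) (k : ℤ) + cL (m + 1) ((k : ℤ) - 1)) * ((x - 1) / 2) ^ (m + 2 - k) * ((x + 1) / 2) ^ k := by
    rw [legendre_eq, hsplit,
      mul_u ((x - 1) / 2) ((x + 1) / 2) (m + 1) (cL (m + 1)) htop1,
      mul_v ((x - 1) / 2) ((x + 1) / 2) (m + 1) (cL (m + 1)) (cL_neg (m + 1) (-1) (by norm_num)),
      show m + 1 + 2 = m + 3 from by omega, show m + 1 + 1 = m + 2 from by omega,
      ← Finset.sum_add_distrib]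
    exact Finset.sum_congr rfl fun k hk => by ring
  have a1 : ((x + 1) / 2 - (x - 1) / 2) * legendreFun m x
      = ∑ k ∈ Finset.range (m + 2),
          (cL m ((k : ℤ) - 1) - cL m (k : ℤ)) * ((x - 1) / 2) ^ (m + 1 - k) * ((x + 1) / 2) ^ k := by
    rw [legendre_eq, sub_mul,
      mul_v ((x - 1) / 2) ((x + 1) / 2) m (cL m) (cL_neg m (-1) (by norm_num)),
      mul_u ((x - 1) / 2) ((x + 1) / 2) m (cL m) htop0,
      ← Finset.sum_sub_distrib]
    exact Finset.sum_congr rfl fun k hk => by ring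
  have hdneg : (fun k : ℤ => cL m (k - 1) - cL m k) (-1) = 0 := by
    show cL m (-1 - 1) - cL m (-1) = 0
    rw [show (-1 : ℤ) - 1 = -2 from by norm_num, cL_neg m (-2) (by norm_num),
      cL_neg m (-1) (by norm_num), sub_zero]
  have hdtop : (fun k : ℤ => cL m (k - 1) - cL m k) (((m + 1 : ℕ) : ℤ) + 1) = 0 := by
    show cL m (((m + 1 : ℕ) : ℤ) + 1 - 1) - cL m (((m + 1 : ℕ) : ℤ) + 1) = 0
    rw [show ((m + 1 : ℕ) : ℤ) + 1 - 1 = ((m + 1 : ℕ) : ℤ) from by ring,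
      show ((m + 1 : ℕ) : ℤ) + 1 = ((m + 2 : ℕ) : ℤ) from by push_cast; ring,
      cL_big m (m + 1) (by omega), cL_big m (m + 2) (by omega), sub_zero]
  have e2 : legendreFun m x
      = ∑ k ∈ Finset.range (m + 3),
          (cL m ((k : ℤ) - 2) - 2 * cL m ((k : ℤ) - 1) + cL m (k : ℤ))
            * ((x - 1) / 2) ^ (m + 2 - k) * ((x + 1) / 2) ^ k := by
    have a2 : ((x + 1) / 2 - (x - 1) / 2) * (((x + 1) / 2 - (x - 1) / 2) * legendreFun m x)
        = ∑ k ∈ Finset.range (m + 3),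
            (cL m ((k : ℤ) - 2) - 2 * cL m ((k : ℤ) - 1) + cL m (k : ℤ))
              * ((x - 1) / 2) ^ (m + 2 - k) * ((x + 1) / 2) ^ k := by
      rw [a1, sub_mul,
        mul_v ((x - 1) / 2) ((x + 1) / 2) (m + 1) (fun k => cL m (k - 1) - cL m k) hdneg,
        mul_u ((x - 1) / 2) ((x + 1) / 2) (m + 1) (fun k => cL m (k - 1) - cL m k) hdtop,
        show m + 1 + 2 = m + 3 from by omega, show m + 1 + 1 = m + 2 from by omega,
        ← Finset.sum_sub_distrib]
      refine Finset.sum_congr rfl fun k hk => ?_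
      show (cL m ((k : ℤ) - 1 - 1) - cL m ((k : ℤ) - 1)) * _ * _
          - (cL m ((k : ℤ) - 1) - cL m (k : ℤ)) * _ * _ = _
      rw [show (k : ℤ) - 1 - 1 = (k : ℤ) - 2 from by ring]
      ring
    calc legendreFun m x = ((x + 1) / 2 - (x - 1) / 2) * (((x + 1) / 2 - (x - 1) / 2) * legendreFun m x) := by
          rw [show (x + 1) / 2 - (x - 1) / 2 = 1 from by ring]; ring
    _ = _ := a2
  have e3 : legendreFun (m + 2) x
      = ∑ k ∈ Finset.range (m + 3), cL (m + 2) (k : ℤ) * ((x - 1) / 2) ^ (m + 2 - k) * ((x + 1) / 2) ^ k := by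
    rw [legendre_eq, show m + 2 + 1 = m + 3 from by omega]
  rw [e1, e2, e3, Finset.mul_sum, Finset.mul_sum, Finset.mul_sum, ← Finset.sum_add_distrib]
  refine Finset.sum_congr rfl fun k hk => ?_
  have hK := K2 m k
  linear_combination (((x - 1) / 2) ^ (m + 2 - k) * ((x + 1) / 2) ^ k) * hK

lemma legendre_zero (x : ℝ) : legendreFun 0 x = 1 := by
  unfold legendreFun
  simp

lemma legendre_one (x : ℝ) : legendreFun 1 x = x := by
  unfold legendreFun
  rw [Finset.sum_range_succ, Finset.sum_range_one]
  norm_num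
  ring

lemma legendre_rec (l : ℕ) (x : ℝ) :
    ((2 * l : ℝ) + 1) * (x * legendreFun l x)
      = ((l : ℝ) + 1) * legendreFun (l + 1) x + (l : ℝ) * legendreFun (l - 1) x := by
  match l with
  | 0 => rw [legendre_zero, legendre_one]; norm_num
  | (m + 1) =>
      have h := legendre_rec_succ m x
      rw [show m + 1 - 1 = m from rfl]
      push_cast
      push_cast at h
      linarith [h]

lemma legendre_cont (l : ℕ) : Continuous (legendreFun l) := by
  unfold legendreFun
  fun_prop

lemma geg_cont (n : ℕ) (lam : ℝ) : Continuous (gegenbauer n lam) := by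
  unfold gegenbauer
  fun_prop

lemma cont1 (g : ℕ) (lam ρ : ℝ) (j : ℕ) :
    Continuous fun t => gegenbauer g lam (ρ * t) * legendreFun j t :=
  (((geg_cont g lam).comp (continuous_const.mul continuous_id)).mul (legendre_cont j))

lemma cont2 (g : ℕ) (lam ρ : ℝ) (j : ℕ) :
    Continuous fun t => t * (gegenbauer g lam (ρ * t) * legendreFun j t) :=
  continuous_id.mul (cont1 g lam ρ j)

lemma step2 (lam : ℝ) (g : ℕ) (l : ℕ) (ρ : ℝ) :
    ((2 * l : ℝ) + 1) * ∫ t in (-1:ℝ)..1, t * (gegenbauer g lam (ρ * t) * legendreFun l t)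
      = ((l : ℝ) + 1) * (∫ t in (-1:ℝ)..1, gegenbauer g lam (ρ * t) * legendreFun (l + 1) t)
        + (l : ℝ) * ∫ t in (-1:ℝ)..1, gegenbauer g lam (ρ * t) * legendreFun (l - 1) t := by
  rw [← intervalIntegral.integral_const_mul, ← intervalIntegral.integral_const_mul,
    ← intervalIntegral.integral_const_mul,
    ← intervalIntegral.integral_add
      (f := fun t => ((l : ℝ) + 1) * (gegenbauer g lam (ρ * t) * legendreFun (l + 1) t))
      (g := fun t => (l : ℝ) * (gegenbauer g lam (ρ * t) * legendreFun (l - 1) t))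
      ((continuous_const.mul (cont1 g lam ρ (l + 1))).intervalIntegrable _ _)
      ((continuous_const.mul (cont1 g lam ρ (l - 1))).intervalIntegrable _ _)]
  refine intervalIntegral.integral_congr fun t _ => ?_
  have hl := legendre_rec l t
  linear_combination (gegenbauer g lam (ρ * t)) * hl

lemma step1 {lam : ℝ} (hlam : 0 < lam) (N l : ℕ) (ρ : ℝ) :
    ((N : ℝ) + 2) * ∫ t in (-1:ℝ)..1, gegenbauer (N + 2) lam (ρ * t) * legendreFun l t
      = 2 * ((N : ℝ) + 1 + lam) * ρ *
          (∫ t in (-1:ℝ)..1, t * (gegenbauer (N + 1) lam (ρ * t) * legendreFun l t))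
        - ((N : ℝ) + 2 * lam) * ∫ t in (-1:ℝ)..1, gegenbauer N lam (ρ * t) * legendreFun l t := by
  rw [← intervalIntegral.integral_const_mul, ← intervalIntegral.integral_const_mul,
    ← intervalIntegral.integral_const_mul,
    ← intervalIntegral.integral_sub
      (f := fun t => 2 * ((N : ℝ) + 1 + lam) * ρ * (t * (gegenbauer (N + 1) lam (ρ * t) * legendreFun l t)))
      (g := fun t => ((N : ℝ) + 2 * lam) * (gegenbauer N lam (ρ * t) * legendreFun l t))
      ((continuous_const.mul (cont2 (N + 1) lam ρ l)).intervalIntegrable _ _)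
      ((continuous_const.mul (cont1 N lam ρ l)).intervalIntegrable _ _)]
  refine intervalIntegral.integral_congr fun t _ => ?_
  have hg := gegen_rec hlam N (ρ * t)
  linear_combination (legendreFun l t) * hg

lemma step0 {lam : ℝ} (hlam : 0 < lam) (l : ℕ) (ρ : ℝ) :
    (∫ t in (-1:ℝ)..1, gegenbauer 1 lam (ρ * t) * legendreFun l t)
      = 2 * lam * ρ * ∫ t in (-1:ℝ)..1, t * (gegenbauer 0 lam (ρ * t) * legendreFun l t) := by
  rw [← intervalIntegral.integral_const_mul]
  refine intervalIntegral.integral_congr fun t _ => ?_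
  rw [geg_one hlam, geg_zero hlam]
  ring

lemma Ifun_nat (α : ℝ) (k : ℕ) (l : ℕ) (ρ : ℝ) :
    Ifun α (k : ℤ) l ρ
      = 1 / 2 * ∫ t in (-1:ℝ)..1, gegenbauer k (α + 3 / 2) (ρ * t) * legendreFun l t := by
  unfold Ifun
  rw [if_neg (by omega), Int.toNat_natCast]


/-- the recursion
`I_{n+1,l}^α = ((n+α+3/2)/(n+1)) ρ [((l+1)/(l+1/2)) I_{n,l+1}^α + (l/(l+1/2)) I_{n,l−1}^α]
 − ((n+2α+2)/(n+1)) I_{n−1,l}^α` for `n + 1 − l` even and nonnegative.  (For `l = 0` the term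
with index `l − 1` carries the factor `l/(l+1/2) = 0` and may be ignored.) -/
theorem stmt12 (α : ℝ) (hα : -1 < α) (n l : ℕ) (hle : l ≤ n + 1) (hpar : Even (n + 1 - l))
    (ρ : ℝ) (hρ : ρ ∈ Set.Icc (0:ℝ) 1) :
    Ifun α ((n : ℤ) + 1) l ρ
      = ((n : ℝ) + α + 3 / 2) / ((n : ℝ) + 1) * ρ *
          (((l : ℝ) + 1) / ((l : ℝ) + 1 / 2) * Ifun α (n : ℤ) (l + 1) ρ +
            (l : ℝ) / ((l : ℝ) + 1 / 2) * Ifun α (n : ℤ) (l - 1) ρ)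
        - ((n : ℝ) + 2 * α + 2) / ((n : ℝ) + 1) * Ifun α ((n : ℤ) - 1) l ρ := by
  have hlam : 0 < α + 3 / 2 := by linarith
  have hl2 : ((l : ℝ) + 1 / 2) ≠ 0 := by positivity
  have hl2' : ((2 * l : ℝ) + 1) ≠ 0 := by positivity
  match n with
  | 0 =>
      have hneg : Ifun α (((0 : ℕ) : ℤ) - 1) l ρ = 0 := by
        unfold Ifun; rw [if_pos (by omega)]
      rw [show ((0 : ℕ) : ℤ) + 1 = ((1 : ℕ) : ℤ) from by norm_num, hneg,
        Ifun_nat, Ifun_nat, Ifun_nat, step0 hlam l ρ]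
      have h2 := step2 (α + 3 / 2) 0 l ρ
      set A := ∫ t in (-1:ℝ)..1, gegenbauer 0 (α + 3 / 2) (ρ * t) * legendreFun (l + 1) t with hA
      set B := ∫ t in (-1:ℝ)..1, gegenbauer 0 (α + 3 / 2) (ρ * t) * legendreFun (l - 1) t with hB
      set J := ∫ t in (-1:ℝ)..1, t * (gegenbauer 0 (α + 3 / 2) (ρ * t) * legendreFun l t) with hJ
      have hJ2 : J = (((l : ℝ) + 1) * A + (l : ℝ) * B) / ((2 * l : ℝ) + 1) := by
        rw [eq_div_iff hl2']
        linear_combination h2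
      rw [hJ2]
      push_cast
      field_simp
      ring
  | (N + 1) =>
      rw [show ((N + 1 : ℕ) : ℤ) + 1 = ((N + 2 : ℕ) : ℤ) from by push_cast; ring,
        show ((N + 1 : ℕ) : ℤ) - 1 = ((N : ℕ) : ℤ) from by push_cast; ring,
        Ifun_nat, Ifun_nat, Ifun_nat, Ifun_nat]
      have h1 := step1 hlam N l ρ
      have h2 := step2 (α + 3 / 2) (N + 1) l ρ
      have hN : ((N : ℝ) + 2) ≠ 0 := by positivity
      set IA := ∫ t in (-1:ℝ)..1, gegenbauer (N + 2) (α + 3 / 2) (ρ * t) * legendreFun l t with hIA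
      set A := ∫ t in (-1:ℝ)..1, gegenbauer (N + 1) (α + 3 / 2) (ρ * t) * legendreFun (l + 1) t with hA
      set B := ∫ t in (-1:ℝ)..1, gegenbauer (N + 1) (α + 3 / 2) (ρ * t) * legendreFun (l - 1) t with hB
      set K := ∫ t in (-1:ℝ)..1, gegenbauer N (α + 3 / 2) (ρ * t) * legendreFun l t with hK
      set J := ∫ t in (-1:ℝ)..1, t * (gegenbauer (N + 1) (α + 3 / 2) (ρ * t) * legendreFun l t) with hJ
      have hJ2 : J = (((l : ℝ) + 1) * A + (l : ℝ) * B) / ((2 * l : ℝ) + 1) := by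
        rw [eq_div_iff hl2']
        linear_combination h2
      rw [hJ2] at h1
      have hI2 : IA = (2 * ((N : ℝ) + 1 + (α + 3 / 2)) * ρ *
          ((((l : ℝ) + 1) * A + (l : ℝ) * B) / ((2 * l : ℝ) + 1))
          - ((N : ℝ) + 2 * (α + 3 / 2)) * K) / ((N : ℝ) + 2) := by
        rw [eq_div_iff hN]
        linear_combination h1
      rw [hI2]
      push_cast
      field_simp
      ring
end
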